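/- arXiv:1602.04383 — 4 statements merged into one kernel-verified Lean document; each statement's English description precedes it below -/
import Mathlib

section
/- Let L_r ⊆ L_{r+1} be lattices in V with L_r^# = ε L_{r+1}. Then there exists a lattice L_{r†} with L_r ⊆ L_{r†} ⊆ L_{r+1} and (L_{r†})^# = ε L_{r†}. -/
open scoped Classical

noncomputable section

namespace AffLat

variable (k : Type*) [Field k]

/-- The uniformizer `ε ∈ F = k((ε))`. -/
def eps : LaurentSeries k := algebraMap (PowerSeries k) (LaurentSeries k) PowerSeries.X

/-- The subring `𝔬 = k[[ε]]` of `F = k((ε))`. -/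
def oring : Subring (LaurentSeries k) :=
  (algebraMap (PowerSeries k) (LaurentSeries k)).range

variable {k}
variable {V : Type*} [AddCommGroup V] [Module (LaurentSeries k) V]
  [Module (PowerSeries k) V] [IsScalarTower (PowerSeries k) (LaurentSeries k) V]

/-- A lattice in `V`: a finitely generated `𝔬`-submodule `L` with `F·L = V`. -/
def IsLat (L : Submodule (PowerSeries k) V) : Prop :=
  L.FG ∧ Submodule.span (LaurentSeries k) (L : Set V) = ⊤

/-- The dual `L^# = {v ∈ V | ∀ x ∈ L, (v, x) ∈ 𝔬}` of an `𝔬`-submodule `L` with respect to a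
bilinear form `Φ`. -/
def sharp (Φ : V →ₗ[LaurentSeries k] V →ₗ[LaurentSeries k] LaurentSeries k)
    (L : Submodule (PowerSeries k) V) : Submodule (PowerSeries k) V where
  carrier := {v | ∀ x ∈ L, Φ v x ∈ oring k}
  zero_mem' := fun x _ => by rw [map_zero, LinearMap.zero_apply]; exact zero_mem _
  add_mem' := fun {a b} ha hb x hx => by
    rw [map_add, LinearMap.add_apply]; exact add_mem (ha x hx) (hb x hx)
  smul_mem' := fun c v hv x hx => by
    rw [← algebraMap_smul (LaurentSeries k) c v, map_smul, LinearMap.smul_apply, smul_eq_mul]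
    exact mul_mem ⟨c, rfl⟩ (hv x hx)

/-- The `𝔬`-submodule `a • L` for a scalar `a ∈ F`. -/
def esmul (a : LaurentSeries k) (L : Submodule (PowerSeries k) V) :
    Submodule (PowerSeries k) V where
  carrier := (fun v => a • v) '' (L : Set V)
  zero_mem' := ⟨0, L.zero_mem, smul_zero a⟩
  add_mem' := by
    rintro x y ⟨x', hx', rfl⟩ ⟨y', hy', rfl⟩
    exact ⟨x' + y', L.add_mem hx' hy', smul_add a x' y'⟩
  smul_mem' := by
    rintro c x ⟨x', hx', rfl⟩
    refine ⟨c • x', L.smul_mem c hx', ?_⟩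
    show a • (c • x') = c • (a • x')
    rw [← algebraMap_smul (LaurentSeries k) c x', ← algebraMap_smul (LaurentSeries k) c (a • x'),
      smul_smul, smul_smul, mul_comm]

/-- The quotient `p / s` of an `𝔬`-submodule `p` by the `𝔬`-submodule `s ∩ p`. -/
abbrev relQ (p s : Submodule (PowerSeries k) V) : Type _ :=
  ↥p ⧸ (s.comap p.subtype)

/-- The dimension over `k` of an `𝔬`-module (with the `k`-action coming from
`k → 𝔬 = k[[ε]]`). -/
def kdim (k : Type*) [Field k] (Q : Type*) [AddCommGroup Q] [Module (PowerSeries k) Q] : ℕ :=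
  @Module.finrank k Q _ _ (Module.compHom Q (PowerSeries.C : k →+* PowerSeries k))

/-- Finite-dimensionality over `k` of an `𝔬`-module (with the `k`-action coming from
`k → 𝔬 = k[[ε]]`). -/
def kfinite (k : Type*) [Field k] (Q : Type*) [AddCommGroup Q] [Module (PowerSeries k) Q] :
    Prop :=
  @FiniteDimensional k Q _ _ (Module.compHom Q (PowerSeries.C : k →+* PowerSeries k))

end AffLat


namespace AffLat

variable {k : Type*} [Field k]
variable {V : Type*} [AddCommGroup V] [Module (LaurentSeries k) V]
  [Module (PowerSeries k) V] [IsScalarTower (PowerSeries k) (LaurentSeries k) V]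

lemma mem_sharp {Φ : V →ₗ[LaurentSeries k] V →ₗ[LaurentSeries k] LaurentSeries k}
    {L : Submodule (PowerSeries k) V} {v : V} :
    v ∈ sharp Φ L ↔ ∀ x ∈ L, Φ v x ∈ oring k := Iff.rfl

lemma mem_esmul {a : LaurentSeries k} {L : Submodule (PowerSeries k) V} {v : V} :
    v ∈ esmul a L ↔ ∃ x ∈ L, a • x = v := Iff.rfl

end AffLat

open AffLat

set_option maxHeartbeats 1600000 in
/-- Let `L_r ⊆ L_{r+1}` be lattices with `L_r^# = ε L_{r+1}`.  Then there is
a lattice `L_{r†}` with `L_r ⊆ L_{r†} ⊆ L_{r+1}` and `L_{r†}^# = ε L_{r†}`. -/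
theorem statement5 {k : Type*} [Field k] [Fintype k] (hodd : Odd (Fintype.card k))
    {V : Type*} [AddCommGroup V] [Module (LaurentSeries k) V]
    [Module (PowerSeries k) V] [IsScalarTower (PowerSeries k) (LaurentSeries k) V]
    [FiniteDimensional (LaurentSeries k) V]
    (Φ : V →ₗ[LaurentSeries k] V →ₗ[LaurentSeries k] LaurentSeries k)
    (halt : ∀ v : V, Φ v v = 0)
    (hnondeg : ∀ v : V, (∀ w : V, Φ v w = 0) → v = 0)
    (Lr Lr1 : Submodule (PowerSeries k) V) (hLr : IsLat Lr) (hLr1 : IsLat Lr1)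
    (hsub : Lr ≤ Lr1)
    (hsharp : sharp Φ Lr = esmul (eps k) Lr1) :
    ∃ Ld : Submodule (PowerSeries k) V,
      IsLat Ld ∧ Lr ≤ Ld ∧ Ld ≤ Lr1 ∧ sharp Φ Ld = esmul (eps k) Ld := by
  classical
  -- skew-symmetry of `Φ`
  have skew0 : ∀ x y : V, Φ x y + Φ y x = 0 := by
    intro x y
    have h := halt (x + y)
    simp only [map_add, LinearMap.add_apply, halt] at h
    linear_combination h
  have skew : ∀ x y : V, Φ x y = -(Φ y x) := fun x y =>
    eq_neg_of_add_eq_zero_right (skew0 y x)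
  -- key integrality: `ε Φ(u,x) ∈ 𝔬` for `u ∈ Lr1`, `x ∈ Lr`
  have key : ∀ u ∈ Lr1, ∀ x ∈ Lr, eps k * Φ u x ∈ oring k := by
    intro u hu x hx
    have h1 : eps k • u ∈ sharp Φ Lr := by
      rw [hsharp]; exact mem_esmul.mpr ⟨u, hu, rfl⟩
    have h2 := mem_sharp.mp h1 x hx
    rwa [map_smul, LinearMap.smul_apply, smul_eq_mul] at h2
  have key' : ∀ u ∈ Lr1, ∀ x ∈ Lr, eps k * Φ x u ∈ oring k := by
    intro u hu x hx
    have heq : eps k * Φ x u = -(eps k * Φ u x) := by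
      linear_combination eps k * skew0 x u
    rw [heq]
    exact neg_mem (key u hu x hx)
  -- the family of "isotropic" submodules between `Lr` and `Lr1`
  set S : Set (Submodule (PowerSeries k) V) :=
    {M | Lr ≤ M ∧ M ≤ Lr1 ∧ ∀ x ∈ M, ∀ y ∈ M, eps k * Φ x y ∈ oring k} with hSdef
  have hLrS : Lr ∈ S := ⟨le_rfl, hsub, fun x hx y hy => key' y (hsub hy) x hx⟩
  -- Zorn's lemma: a maximal element of `S`
  obtain ⟨Ld, hLrLd', hmax⟩ := zorn_le_nonempty₀ S (by
-- chain condition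
    intro c hcS hchain y hy
    refine ⟨sSup c, ⟨le_trans (hcS hy).1 (le_sSup hy), sSup_le fun z hz => (hcS hz).2.1, ?_⟩,
      fun z hz => le_sSup hz⟩
    intro x hx y' hy'
    rw [Submodule.mem_sSup_of_directed ⟨y, hy⟩ hchain.directedOn] at hx hy'
    obtain ⟨M1, hM1, hx1⟩ := hx
    obtain ⟨M2, hM2, hy2⟩ := hy'
    rcases hchain.total hM1 hM2 with h | h
    · exact (hcS hM2).2.2 x (h hx1) y' hy2
    · exact (hcS hM1).2.2 x hx1 y' (h hy2)) Lr hLrS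
  obtain ⟨hLrLd, hLdLr1, hiso⟩ := hmax.1
  -- `Ld` is finitely generated
  have hfg : Ld.FG := by
    haveI : IsNoetherian (PowerSeries k) ↥Lr1 := isNoetherian_of_fg_of_noetherian Lr1 hLr1.1
    have h1 : (Ld.comap Lr1.subtype).FG := IsNoetherian.noetherian _
    have h2 := h1.map Lr1.subtype
    rwa [Submodule.map_comap_subtype, inf_eq_right.mpr hLdLr1] at h2
  -- `Ld` spans `V` over `F`
  have hspan : Submodule.span (LaurentSeries k) (Ld : Set V) = ⊤ := by
    rw [eq_top_iff, ← hLr.2]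
    exact Submodule.span_mono fun x hx => hLrLd hx
  -- the duality `Ld^# = ε Ld`
  have hsharpLd : sharp Φ Ld = esmul (eps k) Ld := by
    apply le_antisymm
    · intro v hv
      have hv2 : ∀ x ∈ Ld, Φ v x ∈ oring k := mem_sharp.mp hv
      have hv' : v ∈ sharp Φ Lr := mem_sharp.mpr fun x hx => hv2 x (hLrLd hx)
      rw [hsharp] at hv'
      obtain ⟨u, hu, rfl⟩ := mem_esmul.mp hv'
      refine mem_esmul.mpr ⟨u, ?_, rfl⟩
      -- show `u ∈ Ld` by maximality of `Ld`
      have hεu : ∀ x ∈ Ld, eps k * Φ u x ∈ oring k := by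
        intro x hx
        have := hv2 x hx
        rwa [map_smul, LinearMap.smul_apply, smul_eq_mul] at this
      have hM : (Ld ⊔ Submodule.span (PowerSeries k) {u}) ∈ S := by
        refine ⟨le_trans hLrLd le_sup_left, sup_le hLdLr1 ?_, ?_⟩
        · rw [Submodule.span_le, Set.singleton_subset_iff]; exact hu
        · intro x hx y hy
          rw [Submodule.mem_sup] at hx hy
          obtain ⟨a, ha, b, hb, rfl⟩ := hx
          obtain ⟨a', ha', b', hb', rfl⟩ := hy
          rw [Submodule.mem_span_singleton] at hb hb'
          obtain ⟨c, rfl⟩ := hb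
          obtain ⟨c', rfl⟩ := hb'
          rw [← algebraMap_smul (LaurentSeries k) c u,
            ← algebraMap_smul (LaurentSeries k) c' u]
          set cl := algebraMap (PowerSeries k) (LaurentSeries k) c with hcl
          set cl' := algebraMap (PowerSeries k) (LaurentSeries k) c' with hcl'
          have hclO : cl ∈ oring k := ⟨c, rfl⟩
          have hclO' : cl' ∈ oring k := ⟨c', rfl⟩
          have expand : Φ (a + cl • u) (a' + cl' • u)
              = Φ a a' + cl' * Φ a u + cl * Φ u a' := by
            simp only [map_add, LinearMap.add_apply, map_smul, LinearMap.smul_apply,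
              smul_eq_mul, halt u, mul_zero, add_zero]
            ring
          rw [expand]
          have hrearr : eps k * (Φ a a' + cl' * Φ a u + cl * Φ u a')
              = eps k * Φ a a' + cl' * (eps k * Φ a u) + cl * (eps k * Φ u a') := by ring
          rw [hrearr]
          have h1 : eps k * Φ a a' ∈ oring k := hiso a ha a' ha'
          have h2 : eps k * Φ u a' ∈ oring k := hεu a' ha'
          have h3 : eps k * Φ a u ∈ oring k := by
            have heq : eps k * Φ a u = -(eps k * Φ u a) := by
              linear_combination eps k * skew0 a u
            rw [heq]; exact neg_mem (hεu a ha)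
          exact add_mem (add_mem h1 (mul_mem hclO' h3)) (mul_mem hclO h2)
      have hles : Ld ⊔ Submodule.span (PowerSeries k) {u} ≤ Ld := hmax.2 hM le_sup_left
      exact hles (Submodule.mem_sup_right (Submodule.mem_span_singleton_self u))
    · intro v hv
      obtain ⟨u, hu, rfl⟩ := mem_esmul.mp hv
      refine mem_sharp.mpr fun x hx => ?_
      rw [map_smul, LinearMap.smul_apply, smul_eq_mul]
      exact hiso u hu x hx
  exact ⟨Ld, ⟨hfg, hspan⟩, hLrLd, hLdLr1, hsharpLd⟩
end
end

section
/- Let M be a lattice in V with M^# = ε M, and let b be the nondegenerate alternating k-bilinear form on M/εM given by b(x + εM, y + εM) = (ε·(x, y) mod ε𝔬). Let L_0 be a lattice with ε M ⊆ L_0^# ⊆ L_0 ⊆ M and write L_{−1} = L_0^#. Then L_{−1}/εM and L_0/εM are orthogonal complements of each other in M/εM with respect to b; that is, the b-orthogonal complement of L_0/εM equals L_{−1}/εM and the b-orthogonal complement of L_{−1}/εM equals L_0/εM. -/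
open scoped Classical

noncomputable section

namespace AffLat

/-- The residue pairing `(x, y) ↦ (ε·(x,y) mod ε𝔬) ∈ k ≅ 𝔬/ε𝔬`, computed as the coefficient
of `ε^0` in the Laurent series `ε · Φ x y`. -/
def bres {k : Type*} [Field k] {V : Type*} [AddCommGroup V] [Module (LaurentSeries k) V]
    (Φ : V →ₗ[LaurentSeries k] V →ₗ[LaurentSeries k] LaurentSeries k) (x y : V) : k :=
  (eps k * Φ x y).coeff 0

end AffLat


namespace AffLat
namespace S7

variable {k : Type*} [Field k]

lemma eps_eq : eps k = HahnSeries.single (1 : ℤ) (1 : k) := by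
  rw [eps, LaurentSeries.coe_algebraMap, HahnSeries.ofPowerSeries_X]

lemma eps_mul_coeff (f : LaurentSeries k) (n : ℤ) :
    (eps k * f).coeff n = f.coeff (n - 1) := by
  have h : n = (n - 1) + 1 := by ring
  rw [eps_eq, h, HahnSeries.coeff_single_mul_add, one_mul, add_sub_cancel_right]

lemma coeff_eq_zero_of_mem_oring {f : LaurentSeries k} (hf : f ∈ oring k) {m : ℤ}
    (hm : m < 0) : f.coeff m = 0 := by
  obtain ⟨p, rfl⟩ := hf
  show (HahnSeries.ofPowerSeries ℤ k p).coeff m = 0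
  rw [HahnSeries.ofPowerSeries_apply]
  apply HahnSeries.embDomain_notin_range
  rintro ⟨n, rfl⟩
  change (n : ℤ) < 0 at hm
  exact (Int.natCast_nonneg n).not_gt hm

lemma eps_ne_zero : eps k ≠ 0 := by
  rw [eps_eq]
  exact HahnSeries.single_ne_zero one_ne_zero

lemma mem_oring_of_eps_mul {f : LaurentSeries k} (h0 : f.coeff (-1) = 0)
    (h : eps k * f ∈ oring k) : f ∈ oring k := by
  obtain ⟨p, hp⟩ := h
  have hc : PowerSeries.constantCoeff p = 0 := by
    have h1 : (algebraMap (PowerSeries k) (LaurentSeries k) p).coeff ((0 : ℕ) : ℤ)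
        = PowerSeries.coeff 0 p := by
      rw [LaurentSeries.coe_algebraMap]
      exact HahnSeries.ofPowerSeries_apply_coeff p 0
    rw [hp, eps_mul_coeff] at h1
    simp only [Nat.cast_zero, zero_sub] at h1
    rw [h0] at h1
    rw [← PowerSeries.coeff_zero_eq_constantCoeff, ← h1]
  obtain ⟨q, rfl⟩ := PowerSeries.X_dvd_iff.mpr hc
  refine ⟨q, ?_⟩
  have h2 : eps k * algebraMap (PowerSeries k) (LaurentSeries k) q = eps k * f := by
    rw [← hp, map_mul]; rfl
  exact mul_left_cancel₀ eps_ne_zero h2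

variable {V : Type*} [AddCommGroup V] [Module (LaurentSeries k) V]
  [Module (PowerSeries k) V] [IsScalarTower (PowerSeries k) (LaurentSeries k) V]

lemma skew (Φ : V →ₗ[LaurentSeries k] V →ₗ[LaurentSeries k] LaurentSeries k)
    (halt : ∀ v : V, Φ v v = 0) (x y : V) : Φ y x = - Φ x y := by
  have h := halt (x + y)
  simp only [map_add, LinearMap.add_apply, halt] at h
  linear_combination h

lemma sharp_eq_dualSubmodule (Φ : V →ₗ[LaurentSeries k] V →ₗ[LaurentSeries k] LaurentSeries k)
    (N : Submodule (PowerSeries k) V) :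
    sharp Φ N = LinearMap.BilinForm.dualSubmodule Φ N := by
  ext v
  constructor
  · intro hv x hx
    exact Submodule.mem_one.mpr (hv x hx)
  · intro hv x hx
    exact Submodule.mem_one.mp (hv x hx)

lemma dualSubmodule_flip_eq (Φ : V →ₗ[LaurentSeries k] V →ₗ[LaurentSeries k] LaurentSeries k)
    (halt : ∀ v : V, Φ v v = 0) (N : Submodule (PowerSeries k) V) :
    LinearMap.BilinForm.dualSubmodule (R := PowerSeries k) (LinearMap.BilinForm.flip Φ) N
      = LinearMap.BilinForm.dualSubmodule Φ N := by
  ext v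
  simp only [LinearMap.BilinForm.mem_dualSubmodule]
  refine forall₂_congr fun x hx => ?_
  rw [LinearMap.BilinForm.flip_apply, skew Φ halt, neg_mem_iff]

lemma sharp_sharp (Φ : V →ₗ[LaurentSeries k] V →ₗ[LaurentSeries k] LaurentSeries k)
    (halt : ∀ v : V, Φ v v = 0)
    (hnondeg : ∀ v : V, (∀ w : V, Φ v w = 0) → v = 0)
    (L : Submodule (PowerSeries k) V) (hL : IsLat L) :
    sharp Φ (sharp Φ L) = L := by
  classical
  haveI : Module.Finite (PowerSeries k) ↥L := Module.Finite.iff_fg.mpr hL.1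
  haveI : NoZeroSMulDivisors (PowerSeries k) V := by
    constructor
    intro c v h
    rcases eq_or_ne c 0 with rfl | hc
    · exact Or.inl rfl
    · refine Or.inr ?_
      have h' : algebraMap (PowerSeries k) (LaurentSeries k) c • v = 0 := by
        rwa [algebraMap_smul]
      have hc' : algebraMap (PowerSeries k) (LaurentSeries k) c ≠ 0 :=
        (map_ne_zero_iff _ (IsFractionRing.injective (PowerSeries k) (LaurentSeries k))).mpr hc
      calc v = ((algebraMap (PowerSeries k) (LaurentSeries k) c)⁻¹
              * algebraMap (PowerSeries k) (LaurentSeries k) c) • v := by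
              rw [inv_mul_cancel₀ hc', one_smul]
        _ = (algebraMap (PowerSeries k) (LaurentSeries k) c)⁻¹
              • (algebraMap (PowerSeries k) (LaurentSeries k) c • v) := mul_smul _ _ _
        _ = 0 := by rw [h', smul_zero]
  haveI : NoZeroSMulDivisors (PowerSeries k) ↥L :=
    Function.Injective.noZeroSMulDivisors _ Subtype.coe_injective rfl (fun _ _ => rfl)
  haveI : Module.Free (PowerSeries k) ↥L := Module.free_of_finite_type_torsion_free'
  set ι := Module.Free.ChooseBasisIndex (PowerSeries k) ↥L with hι
  set b := Module.Free.chooseBasis (PowerSeries k) ↥L with hb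
  set v : ι → V := fun i => (b i : V) with hv
  have hspan : Submodule.span (PowerSeries k) (Set.range v) = L := by
    have hcomp : v = L.subtype ∘ b := rfl
    rw [hcomp, Set.range_comp, ← Submodule.map_span, b.span_eq, Submodule.map_top,
      Submodule.range_subtype]
  have hli : LinearIndependent (LaurentSeries k) v := by
    rw [← LinearIndependent.iff_fractionRing (PowerSeries k) (LaurentSeries k)]
    exact b.linearIndependent.map' L.subtype (Submodule.ker_subtype L)
  have htop : ⊤ ≤ Submodule.span (LaurentSeries k) (Set.range v) := by
    rw [← hL.2, Submodule.span_le]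
    intro x hx
    have hx' : x ∈ Submodule.span (PowerSeries k) (Set.range v) := hspan ▸ hx
    exact Submodule.span_le_restrictScalars (PowerSeries k) (LaurentSeries k) _ hx'
  set bV : Module.Basis ι (LaurentSeries k) V := Module.Basis.mk hli htop with hbV
  have hrange : Set.range ⇑bV = Set.range v := by rw [hbV, Module.Basis.coe_mk]
  have key := LinearMap.BilinForm.dualSubmodule_dualSubmodule_flip_of_basis
    (R := PowerSeries k) Φ
    ⟨hnondeg, fun y hy => hnondeg y (fun w => by rw [skew Φ halt w y, hy w, neg_zero])⟩ bV
  rw [hrange, hspan] at key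
  rw [sharp_eq_dualSubmodule Φ L, ← dualSubmodule_flip_eq Φ halt L,
    sharp_eq_dualSubmodule, key]

end S7
end AffLat

open AffLat

/-- Let `M` be a lattice with `M^# = εM` and let `b` be the induced
nondegenerate alternating `k`-bilinear form on `M/εM`.  Let `L₀` be a lattice with
`εM ⊆ L₀^# ⊆ L₀ ⊆ M` and `L₋₁ = L₀^#`.  Then `L₋₁/εM` and `L₀/εM` are the `b`-orthogonal
complements of each other in `M/εM`. -/
theorem statement7 {k : Type*} [Field k] [Fintype k] (hodd : Odd (Fintype.card k))
    {V : Type*} [AddCommGroup V] [Module (LaurentSeries k) V]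
    [Module (PowerSeries k) V] [IsScalarTower (PowerSeries k) (LaurentSeries k) V]
    [FiniteDimensional (LaurentSeries k) V]
    (Φ : V →ₗ[LaurentSeries k] V →ₗ[LaurentSeries k] LaurentSeries k)
    (halt : ∀ v : V, Φ v v = 0)
    (hnondeg : ∀ v : V, (∀ w : V, Φ v w = 0) → v = 0)
    (M : Submodule (PowerSeries k) V) (hM : IsLat M)
    (hMsharp : sharp Φ M = esmul (eps k) M)
    (L₀ : Submodule (PowerSeries k) V) (hL₀ : IsLat L₀)
    (h1 : esmul (eps k) M ≤ sharp Φ L₀) (h2 : sharp Φ L₀ ≤ L₀) (h3 : L₀ ≤ M) :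
    -- the `b`-orthogonal complement of `L₀/εM` equals `L₋₁/εM`
    (∀ y ∈ M, (∀ x ∈ L₀, bres Φ x y = 0) ↔ y ∈ sharp Φ L₀) ∧
    -- the `b`-orthogonal complement of `L₋₁/εM` equals `L₀/εM`
    (∀ y ∈ M, (∀ x ∈ sharp Φ L₀, bres Φ x y = 0) ↔ y ∈ L₀) := by
  have hb : ∀ x y : V, bres Φ x y = (Φ x y).coeff (-1) := by
    intro x y
    rw [bres, S7.eps_mul_coeff]
    norm_num
  have key : ∀ N : Submodule (PowerSeries k) V,
      (∀ y ∈ M, ∀ x ∈ N, eps k * Φ y x ∈ oring k) →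
      ∀ y ∈ M, (∀ x ∈ N, bres Φ x y = 0) ↔ y ∈ sharp Φ N := by
    intro N hN y hy
    constructor
    · intro h x hx
      refine S7.mem_oring_of_eps_mul ?_ (hN y hy x hx)
      rw [S7.skew Φ halt x y, HahnSeries.coeff_neg, ← hb, h x hx, neg_zero]
    · intro h x hx
      rw [hb, S7.skew Φ halt y x, HahnSeries.coeff_neg,
        S7.coeff_eq_zero_of_mem_oring (h x hx) (by norm_num), neg_zero]
  have hsmul : ∀ (y x : V), Φ (eps k • y) x = eps k * Φ y x := by
    intro y x
    rw [map_smul, LinearMap.smul_apply, smul_eq_mul]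
  have hMN : ∀ y ∈ M, ∀ x ∈ M, eps k * Φ y x ∈ oring k := by
    intro y hy x hx
    have hmem : eps k • y ∈ sharp Φ M := by
      rw [hMsharp]; exact ⟨y, hy, rfl⟩
    have h' := hmem x hx
    rwa [hsmul] at h'
  have hL0' : ∀ y ∈ M, ∀ x ∈ L₀, eps k * Φ y x ∈ oring k := by
    intro y hy x hx
    have hmem : eps k • y ∈ sharp Φ L₀ := h1 ⟨y, hy, rfl⟩
    have h' := hmem x hx
    rwa [hsmul] at h'
  refine ⟨key L₀ hL0', ?_⟩
  intro y hy
  rw [key (sharp Φ L₀) (fun y hy x hx => hMN y hy x (h3 (h2 hx))) y hy,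
    S7.sharp_sharp Φ halt hnondeg L₀ hL₀]
end
end

section
/- Let M be a lattice in V with M^# = ε M, let b be the nondegenerate alternating k-bilinear form on M/εM given by b(x + εM, y + εM) = (ε·(x, y) mod ε𝔬), and let L_0 be a lattice with ε M ⊆ L_0^# ⊆ L_0 ⊆ M, with L_{−1} = L_0^#. Then the assignment L′ ↦ L′/εM is a bijection from the set of lattices L′ in V with L_{−1} ⊆ (L′)^# ⊆ L′ ⊆ L_0 and dim_k L_0/L′ = 1 onto the set of k-subspaces W of L_0/εM with L_{−1}/εM ⊆ W ⊆ L_0/εM, dim_k (L_0/εM)/W = 1, and W^⊥ ⊆ W, where W^⊥ denotes the b-orthogonal complement of W in M/εM. -/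
open scoped Classical

noncomputable section

open AffLat

section Statement8Aux

variable {k : Type*} [Field k]
variable {V : Type*} [AddCommGroup V] [Module (LaurentSeries k) V]
  [Module (PowerSeries k) V] [IsScalarTower (PowerSeries k) (LaurentSeries k) V]

lemma algMap_inj8 : Function.Injective (algebraMap (PowerSeries k) (LaurentSeries k)) := by
  rw [LaurentSeries.coe_algebraMap]
  exact HahnSeries.ofPowerSeries_injective

lemma eps_ne_zero8 : eps k ≠ 0 := by
  intro h
  exact PowerSeries.X_ne_zero ((map_eq_zero_iff _ algMap_inj8).mp h)

lemma coeff0_algMap8 (f : PowerSeries k) :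
    (algebraMap (PowerSeries k) (LaurentSeries k) f).coeff (0 : ℤ) =
      PowerSeries.constantCoeff f := by
  rw [LaurentSeries.coe_algebraMap]
  simpa using LaurentSeries.coeff_coe_powerSeries f 0

lemma mem_sharp8 {Φ : V →ₗ[LaurentSeries k] V →ₗ[LaurentSeries k] LaurentSeries k}
    {L : Submodule (PowerSeries k) V} {v : V} :
    v ∈ sharp Φ L ↔ ∀ x ∈ L, Φ v x ∈ oring k := Iff.rfl

lemma mem_esmul8 {a : LaurentSeries k} {L : Submodule (PowerSeries k) V} {v : V} :
    v ∈ esmul a L ↔ ∃ x ∈ L, a • x = v := by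
  constructor
  · rintro ⟨x, hx, rfl⟩; exact ⟨x, hx, rfl⟩
  · rintro ⟨x, hx, rfl⟩; exact ⟨x, hx, rfl⟩

lemma antisymm8 {Φ : V →ₗ[LaurentSeries k] V →ₗ[LaurentSeries k] LaurentSeries k}
    (halt : ∀ v : V, Φ v v = 0) (w y : V) : Φ w y = -Φ y w := by
  have h := halt (w + y)
  simp only [map_add, LinearMap.add_apply, halt, zero_add, add_zero] at h
  exact eq_neg_of_add_eq_zero_right h

lemma sharp_anti8 {Φ : V →ₗ[LaurentSeries k] V →ₗ[LaurentSeries k] LaurentSeries k}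
    {L L' : Submodule (PowerSeries k) V} (h : L ≤ L') : sharp Φ L' ≤ sharp Φ L :=
  fun _ hv x hx => hv x (h hx)

lemma sharp_esmul_eps8 {Φ : V →ₗ[LaurentSeries k] V →ₗ[LaurentSeries k] LaurentSeries k}
    {M : Submodule (PowerSeries k) V} (hMsharp : sharp Φ M = esmul (eps k) M) :
    sharp Φ (esmul (eps k) M) = M := by
  ext v
  constructor
  · intro hv
    have h1 : eps k • v ∈ sharp Φ M := by
      intro x hx
      have hmem := hv (eps k • x) ⟨x, hx, rfl⟩
      rw [map_smul, smul_eq_mul] at hmem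
      rwa [map_smul, LinearMap.smul_apply, smul_eq_mul]
    rw [hMsharp] at h1
    obtain ⟨x, hx, hxe⟩ := mem_esmul8.mp h1
    have hxv : x = v := by
      have h2 := congrArg (fun u => (eps k)⁻¹ • u) hxe
      simpa [smul_smul, inv_mul_cancel₀ (eps_ne_zero8 (k := k))] using h2
    rwa [← hxv]
  · intro hv x hx
    obtain ⟨u, hu, rfl⟩ := mem_esmul8.mp hx
    have h1 : eps k • v ∈ sharp Φ M := by
      rw [hMsharp]; exact ⟨v, hv, rfl⟩
    have h2 := h1 u hu
    rw [map_smul, LinearMap.smul_apply, smul_eq_mul] at h2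
    rw [map_smul, smul_eq_mul]
    exact h2

lemma bres_zero_of_mem8 {Φ : V →ₗ[LaurentSeries k] V →ₗ[LaurentSeries k] LaurentSeries k}
    {w y : V} (h : Φ w y ∈ oring k) : bres Φ w y = 0 := by
  obtain ⟨f, hf⟩ := h
  unfold bres
  rw [← hf]
  have : eps k * algebraMap (PowerSeries k) (LaurentSeries k) f =
      algebraMap (PowerSeries k) (LaurentSeries k) (PowerSeries.X * f) := by
    rw [map_mul]; rfl
  rw [this, coeff0_algMap8, map_mul, PowerSeries.constantCoeff_X, zero_mul]

lemma mem_of_bres_zero8 {Φ : V →ₗ[LaurentSeries k] V →ₗ[LaurentSeries k] LaurentSeries k}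
    {w y : V} (h : eps k * Φ w y ∈ oring k) (hz : bres Φ w y = 0) : Φ w y ∈ oring k := by
  obtain ⟨g, hg⟩ := h
  unfold bres at hz
  rw [← hg, coeff0_algMap8] at hz
  obtain ⟨h', hh⟩ := PowerSeries.X_dvd_iff.mpr hz
  rw [hh, map_mul] at hg
  have he : (algebraMap (PowerSeries k) (LaurentSeries k) PowerSeries.X) = eps k := rfl
  rw [he] at hg
  exact ⟨h', (mul_left_cancel₀ (eps_ne_zero8 (k := k)) hg.symm).symm⟩

end Statement8Aux


/-- Let `M` be a lattice with `M^# = εM`, `b` the induced form on `M/εM`,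
and `L₀` a lattice with `εM ⊆ L₀^# ⊆ L₀ ⊆ M`, `L₋₁ = L₀^#`.  The assignment `L′ ↦ L′/εM` is a
bijection from the set of lattices `L′` with `L₋₁ ⊆ L′^# ⊆ L′ ⊆ L₀` and `dim_k L₀/L′ = 1`
onto the set of `k`-subspaces `W` of `L₀/εM` with `L₋₁/εM ⊆ W`, of codimension `1` in
`L₀/εM`, and with `W^⊥ ⊆ W`.  Since the `k`-subspaces of `M/εM` correspond exactly to the
`𝔬`-submodules of `V` lying between `εM` and `M` (via `W = L′/εM`), this bijection is
expressed as an equality of the two corresponding sets of `𝔬`-submodules of `V`. -/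
theorem statement8 {k : Type*} [Field k] [Fintype k] (hodd : Odd (Fintype.card k))
    {V : Type*} [AddCommGroup V] [Module (LaurentSeries k) V]
    [Module (PowerSeries k) V] [IsScalarTower (PowerSeries k) (LaurentSeries k) V]
    [FiniteDimensional (LaurentSeries k) V]
    (Φ : V →ₗ[LaurentSeries k] V →ₗ[LaurentSeries k] LaurentSeries k)
    (halt : ∀ v : V, Φ v v = 0)
    (hnondeg : ∀ v : V, (∀ w : V, Φ v w = 0) → v = 0)
    (M : Submodule (PowerSeries k) V) (hM : IsLat M)
    (hMsharp : sharp Φ M = esmul (eps k) M)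
    (L₀ : Submodule (PowerSeries k) V) (hL₀ : IsLat L₀)
    (h1 : esmul (eps k) M ≤ sharp Φ L₀) (h2 : sharp Φ L₀ ≤ L₀) (h3 : L₀ ≤ M) :
    {L' : Submodule (PowerSeries k) V |
        IsLat L' ∧ sharp Φ L₀ ≤ sharp Φ L' ∧ sharp Φ L' ≤ L' ∧ L' ≤ L₀ ∧
        kdim k (relQ L₀ L') = 1} =
    {L' : Submodule (PowerSeries k) V |
        -- `W = L′/εM` is a subspace of `L₀/εM` containing `L₋₁/εM` …
        esmul (eps k) M ≤ L' ∧ sharp Φ L₀ ≤ L' ∧ L' ≤ L₀ ∧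
        -- … of codimension `1` in `L₀/εM` …
        kdim k (relQ L₀ L') = 1 ∧
        -- … with `W^⊥ ⊆ W` (orthogonal complement in `M/εM` with respect to `b`)
        (∀ y ∈ M, (∀ w ∈ L', bres Φ w y = 0) → y ∈ L')} := by
  ext L'
  simp only [Set.mem_setOf_eq]
  constructor
  · rintro ⟨hlat, hs1, hs2, hle, hdim⟩
    have hεM : esmul (eps k) M ≤ L' := h1.trans (hs1.trans hs2)
    refine ⟨hεM, hs1.trans hs2, hle, hdim, ?_⟩
    intro y hyM hb
    have hysharp : y ∈ sharp Φ L' := by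
      intro w hw
      have hwM : w ∈ M := h3 (hle hw)
      have hεy : eps k • y ∈ sharp Φ M := by
        rw [hMsharp]; exact ⟨y, hyM, rfl⟩
      have hyw := hεy w hwM
      rw [map_smul, LinearMap.smul_apply, smul_eq_mul] at hyw
      have hwy : eps k * Φ w y ∈ oring k := by
        have heq : eps k * Φ w y = -(eps k * Φ y w) := by
          rw [antisymm8 halt w y]; ring
        rw [heq]; exact neg_mem hyw
      have hm := mem_of_bres_zero8 hwy (hb w hw)
      rw [antisymm8 halt y w]
      exact neg_mem hm
    exact hs2 hysharp
  · rintro ⟨hεM, hsL₀, hle, hdim, horth⟩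
    have hleM : L' ≤ M := hle.trans h3
    have hsharp : sharp Φ L' ≤ L' := by
      intro y hy
      have hyM : y ∈ M := by
        have hmem : y ∈ sharp Φ (esmul (eps k) M) := fun x hx => hy x (hεM hx)
        rwa [sharp_esmul_eps8 hMsharp] at hmem
      refine horth y hyM ?_
      intro w hw
      have h2' : Φ w y ∈ oring k := by
        rw [antisymm8 halt w y]
        exact neg_mem (hy w hw)
      exact bres_zero_of_mem8 h2'
    refine ⟨⟨?_, ?_⟩, sharp_anti8 hle, hsharp, hle, hdim⟩
    · haveI : Module.Finite (PowerSeries k) M := Module.Finite.iff_fg.mpr hM.1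
      have hfg : (L'.comap M.subtype).FG := IsNoetherian.noetherian _
      have hmap := hfg.map M.subtype
      rwa [Submodule.map_comap_subtype, inf_eq_right.mpr hleM] at hmap
    · apply top_unique
      rw [← hM.2]
      apply Submodule.span_le.mpr
      intro x hx
      have hx' : eps k • x ∈ L' := hεM ⟨x, hx, rfl⟩
      have h' := Submodule.smul_mem (Submodule.span (LaurentSeries k) (L' : Set V))
        (eps k)⁻¹ (Submodule.subset_span hx')
      rwa [smul_smul, inv_mul_cancel₀ (eps_ne_zero8 (k := k)), one_smul] at h'
end
end

section
/- Let A ∈ ^cΞ_{n,d} and A′ = A + E^{00} + E^{r+1,r+1}. Then A′ ∈ Ξ_{n,d}, and Σ′(A) + Σ_0(A) + Σ_{r+1}(A) = Σ′(A′) − Σ_0(A′) − Σ_{r+1}(A′); equivalently, (1/2)·(Σ′(A) + Σ_0(A) + Σ_{r+1}(A)) = (1/2)·(Σ′(A′) − Σ_0(A′) − Σ_{r+1}(A′)). -/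
open scoped Classical

noncomputable section

namespace AffMat

/-- Membership in `^cΞ_{n,d}` (with `n = 2r+2`): `a_{-i,-j} = a_{ij} = a_{i+n,j+n}`,
`Σ_{i=1}^{n} Σ_{j ∈ ℤ} a_{ij} = 2d`, and `a_{00}`, `a_{r+1,r+1}` are even. -/
def MemXiCper (r d : ℕ) (A : ℤ → ℤ → ℕ) : Prop :=
  (∀ i j : ℤ, A i j = A (-i) (-j)) ∧
  (∀ i j : ℤ, A i j = A (i + (2 * r + 2)) (j + (2 * r + 2))) ∧
  Even (A 0 0) ∧ Even (A ((r : ℤ) + 1) ((r : ℤ) + 1)) ∧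
  (∑ᶠ j : ℤ, ∑ i ∈ Finset.Icc (1 : ℤ) (2 * r + 2), A i j) = 2 * d

/-- Membership in `Ξ_{n,d}` (with `n = 2r+2`): the same conditions except that the total sum
is `2d+2` and `a_{00}`, `a_{r+1,r+1}` are odd. -/
def MemXi (r d : ℕ) (A : ℤ → ℤ → ℕ) : Prop :=
  (∀ i j : ℤ, A i j = A (-i) (-j)) ∧
  (∀ i j : ℤ, A i j = A (i + (2 * r + 2)) (j + (2 * r + 2))) ∧
  Odd (A 0 0) ∧ Odd (A ((r : ℤ) + 1) ((r : ℤ) + 1)) ∧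
  (∑ᶠ j : ℤ, ∑ i ∈ Finset.Icc (1 : ℤ) (2 * r + 2), A i j) = 2 * d + 2

/-- The `n`-periodic matrix `E^{ij}`: its `(a,b)` entry is `1` if `(a,b) = (i+pn, j+pn)` for
some `p ∈ ℤ`, and `0` otherwise. -/
def Eper (n i j : ℤ) : ℤ → ℤ → ℕ := fun a b =>
  if ∃ p : ℤ, a = i + p * n ∧ b = j + p * n then 1 else 0

/-- `Σ'(X) = Σ x_{ij} x_{kl}`, summed over quadruples `(i,j,k,l)` with `1 ≤ i ≤ n`, `i ≥ k`,
`j < l` (here `n = 2r+2`). -/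
def SigQuad (r : ℕ) (X : ℤ → ℤ → ℕ) : ℕ :=
  ∑ᶠ i : ℤ, ∑ᶠ j : ℤ, ∑ᶠ m : ℤ, ∑ᶠ l : ℤ,
    if 1 ≤ i ∧ i ≤ 2 * (r : ℤ) + 2 ∧ m ≤ i ∧ j < l then X i j * X m l else 0

/-- `Σ_m(X) = Σ_{i ≥ m > j} x_{ij}`. -/
def SigHook (m : ℤ) (X : ℤ → ℤ → ℕ) : ℕ :=
  ∑ᶠ i : ℤ, ∑ᶠ j : ℤ, if m ≤ i ∧ j < m then X i j else 0

end AffMat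

open AffMat


private lemma fund (n : ℤ) (hn : 0 < n) (x : ℤ) :
    1 ≤ x + n * ((n - x) / n) ∧ x + n * ((n - x) / n) ≤ n := by
  have h1 := Int.mul_ediv_add_emod (n - x) n
  have h2 := Int.emod_nonneg (n - x) (by omega : n ≠ 0)
  have h3 := Int.emod_lt_of_pos (n - x) hn
  omega

private lemma mul_eq_of_close {n a b : ℤ} (hn : 0 < n) (h1 : n * a - n * b < n)
    (h2 : n * b - n * a < n) : n * a = n * b := by
  rcases lt_trichotomy a b with h | h | h
  · exfalso
    have : n * a ≤ n * b - n := by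
      have := mul_le_mul_of_nonneg_left (show a ≤ b - 1 by omega) hn.le
      rw [mul_sub, mul_one] at this; omega
    omega
  · rw [h]
  · exfalso
    have : n * b ≤ n * a - n := by
      have := mul_le_mul_of_nonneg_left (show b ≤ a - 1 by omega) hn.le
      rw [mul_sub, mul_one] at this; omega
    omega

private lemma dvd_small {n x : ℤ} (hn : 0 < n) (h : n ∣ x) (h1 : -n < x) (h2 : x < n) :
    x = 0 := by
  obtain ⟨p, rfl⟩ := h
  rcases lt_trichotomy p 0 with hp | hp | hp
  · have : n * p ≤ n * (-1) := mul_le_mul_of_nonneg_left (by omega) hn.le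
    rw [mul_neg_one] at this; omega
  · simp [hp]
  · have : n * 1 ≤ n * p := mul_le_mul_of_nonneg_left hp hn.le
    rw [mul_one] at this; omega

private lemma finsum_eq_sum_Icc (K : ℤ) (f : ℤ → ℕ) (h : ∀ x, f x ≠ 0 → -K ≤ x ∧ x ≤ K) :
    ∑ᶠ x, f x = ∑ x ∈ Finset.Icc (-K) K, f x :=
  finsum_eq_sum_of_support_subset f (by
    intro x hx
    simp only [Finset.coe_Icc, Set.mem_Icc]
    exact h x hx)

private lemma finsum_ne_zero_exists {f : ℤ → ℕ} (h : ∑ᶠ x, f x ≠ 0) : ∃ x, f x ≠ 0 := by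
  by_contra hc
  push_neg at hc
  exact h ((finsum_congr hc).trans finsum_zero)

private lemma sum_ite_pull {s : Finset ℤ} (c : Prop) [Decidable c] (f : ℤ → ℕ) :
    (∑ x ∈ s, if c then f x else 0) = if c then ∑ x ∈ s, f x else 0 := by
  split_ifs <;> simp
private def W (K : ℤ) : Finset ℤ := Finset.Icc (-K) K

private def QW (K n : ℤ) (X : ℤ → ℤ → ℕ) : ℕ :=
  ∑ i ∈ W K, ∑ j ∈ W K, ∑ m ∈ W K, ∑ l ∈ W K,
    if 1 ≤ i ∧ i ≤ n ∧ m ≤ i ∧ j < l then X i j * X m l else 0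

private def HW (K c : ℤ) (X : ℤ → ℤ → ℕ) : ℕ :=
  ∑ i ∈ W K, ∑ j ∈ W K, if c ≤ i ∧ j < c then X i j else 0

private def CW (K c : ℤ) (X : ℤ → ℤ → ℕ) : ℕ :=
  ∑ i ∈ W K, ∑ j ∈ W K, if i ≤ c ∧ c < j then X i j else 0

private def TW (K n c : ℤ) (X : ℤ → ℤ → ℕ) : ℕ :=
  ∑ i ∈ W K, ∑ j ∈ W K, ∑ m ∈ W K,
    if 1 ≤ i ∧ i ≤ n ∧ m ≤ i ∧ j < m ∧ n ∣ m - c then X i j else 0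

private lemma mem_W {K x : ℤ} : x ∈ W K ↔ -K ≤ x ∧ x ≤ K := by
  simp [W]

private lemma sighook_eq (n M K c : ℤ) (hn : 0 < n) (hM : 0 ≤ M) (hK : K = 10 * (n + M + 1))
    (hc : -2 * n ≤ c ∧ c ≤ 2 * n) (X : ℤ → ℤ → ℕ)
    (hsupp : ∀ i j, X i j ≠ 0 → i - j ≤ n + M ∧ j - i ≤ n + M) :
    SigHook c X = HW K c X := by
  unfold SigHook HW W
  rw [finsum_eq_sum_Icc K]
  · refine Finset.sum_congr rfl fun i _ => ?_
    apply finsum_eq_sum_Icc K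
    intro j hj
    by_cases h : c ≤ i ∧ j < c
    · have hx : X i j ≠ 0 := by
        intro h0; rw [if_pos h, h0] at hj; exact hj rfl
      have := hsupp i j hx
      omega
    · rw [if_neg h] at hj; exact absurd rfl hj
  · intro i hi
    obtain ⟨j, hj⟩ := finsum_ne_zero_exists hi
    by_cases h : c ≤ i ∧ j < c
    · have hx : X i j ≠ 0 := by
        intro h0; rw [if_pos h, h0] at hj; exact hj rfl
      have := hsupp i j hx
      omega
    · rw [if_neg h] at hj; exact absurd rfl hj

private lemma sigquad_eq (r : ℕ) (M K : ℤ) (hM : 0 ≤ M) (hK : K = 10 * ((2 * (r : ℤ) + 2) + M + 1))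
    (X : ℤ → ℤ → ℕ)
    (hsupp : ∀ i j, X i j ≠ 0 → i - j ≤ (2 * (r : ℤ) + 2) + M ∧ j - i ≤ (2 * (r : ℤ) + 2) + M) :
    SigQuad r X = QW K (2 * (r : ℤ) + 2) X := by
  have hterm : ∀ i j m l : ℤ,
      (if 1 ≤ i ∧ i ≤ 2 * (r : ℤ) + 2 ∧ m ≤ i ∧ j < l then X i j * X m l else 0) ≠ 0 →
      (1 ≤ i ∧ i ≤ 2 * (r : ℤ) + 2 ∧ m ≤ i ∧ j < l) ∧ X i j ≠ 0 ∧ X m l ≠ 0 := by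
    intro i j m l h
    by_cases hc : 1 ≤ i ∧ i ≤ 2 * (r : ℤ) + 2 ∧ m ≤ i ∧ j < l
    · rw [if_pos hc] at h
      exact ⟨hc, fun h0 => h (by rw [h0, Nat.zero_mul]), fun h0 => h (by rw [h0, Nat.mul_zero])⟩
    · rw [if_neg hc] at h; exact absurd rfl h
  unfold SigQuad QW W
  rw [finsum_eq_sum_Icc K]
  · refine Finset.sum_congr rfl fun i _ => ?_
    rw [finsum_eq_sum_Icc K]
    · refine Finset.sum_congr rfl fun j hjm => ?_
      rw [finsum_eq_sum_Icc K]
      · refine Finset.sum_congr rfl fun m hmm => ?_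
        rw [finsum_eq_sum_Icc K]
        intro l hl
        obtain ⟨hcond, hx1, hx2⟩ := hterm i j m l hl
        have b1 := hsupp i j hx1
        have b2 := hsupp m l hx2
        omega
      · intro m hm
        obtain ⟨l, hl⟩ := finsum_ne_zero_exists hm
        obtain ⟨hcond, hx1, hx2⟩ := hterm i j m l hl
        have b1 := hsupp i j hx1
        have b2 := hsupp m l hx2
        omega
    · intro j hj
      obtain ⟨m, hm⟩ := finsum_ne_zero_exists hj
      obtain ⟨l, hl⟩ := finsum_ne_zero_exists hm
      obtain ⟨hcond, hx1, hx2⟩ := hterm i j m l hl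
      have b1 := hsupp i j hx1
      have b2 := hsupp m l hx2
      omega
  · intro i hi
    obtain ⟨j, hj⟩ := finsum_ne_zero_exists hi
    obtain ⟨m, hm⟩ := finsum_ne_zero_exists hj
    obtain ⟨l, hl⟩ := finsum_ne_zero_exists hm
    obtain ⟨hcond, hx1, hx2⟩ := hterm i j m l hl
    omega
private lemma double_to_filter (K : ℤ) (P : ℤ → ℤ → Prop) [∀ i j, Decidable (P i j)] (A : ℤ → ℤ → ℕ) :
    (∑ i ∈ W K, ∑ j ∈ W K, if P i j then A i j else 0)
      = ∑ q ∈ (W K ×ˢ W K).filter (fun q => P q.1 q.2 ∧ A q.1 q.2 ≠ 0), A q.1 q.2 := by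
  rw [Finset.sum_filter, ← Finset.sum_product']
  refine Finset.sum_congr rfl fun q _ => ?_
  by_cases h : A q.1 q.2 = 0 <;> by_cases hb : P q.1 q.2 <;> simp [h, hb]

private lemma triple_to_filter (K : ℤ) (P : ℤ → ℤ → ℤ → Prop) [∀ i j m, Decidable (P i j m)] (A : ℤ → ℤ → ℕ) :
    (∑ i ∈ W K, ∑ j ∈ W K, ∑ m ∈ W K, if P i j m then A i j else 0)
      = ∑ x ∈ ((W K ×ˢ W K) ×ˢ W K).filter
          (fun x => P x.1.1 x.1.2 x.2 ∧ A x.1.1 x.1.2 ≠ 0), A x.1.1 x.1.2 := by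
  rw [Finset.sum_filter, ← Finset.sum_product', ← Finset.sum_product']
  refine Finset.sum_congr rfl fun x _ => ?_
  by_cases h : A x.1.1 x.1.2 = 0 <;> by_cases hb : P x.1.1 x.1.2 x.2 <;> simp [h, hb]

private lemma hook_decomp (n M K c : ℤ) (hn : 0 < n) (hM : 0 ≤ M) (hK : K = 10 * (n + M + 1))
    (hc0 : 0 ≤ c) (hcn : c ≤ n) (A : ℤ → ℤ → ℕ)
    (hper : ∀ p i j : ℤ, A (i + n * p) (j + n * p) = A i j)
    (hsupp : ∀ i j, A i j ≠ 0 → i - j ≤ n + M ∧ j - i ≤ n + M) :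
    HW K c A = TW K n c A := by
  unfold HW TW
  refine Eq.trans (double_to_filter K (fun i j => c ≤ i ∧ j < c) A)
    (Eq.trans ?_
      (triple_to_filter K (fun i j m => 1 ≤ i ∧ i ≤ n ∧ m ≤ i ∧ j < m ∧ n ∣ m - c) A).symm)
  refine Finset.sum_nbij'
    (fun q => ((q.1 + n * ((n - q.1) / n), q.2 + n * ((n - q.1) / n)), c + n * ((n - q.1) / n)))
    (fun x => (x.1.1 - x.2 + c, x.1.2 - x.2 + c)) ?_ ?_ ?_ ?_ ?_
  · rintro ⟨i, j⟩ hq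
    simp only [Finset.mem_filter, Finset.mem_product, mem_W] at hq ⊢
    obtain ⟨⟨⟨hi1, hi2⟩, hj1, hj2⟩, ⟨hci, hjc⟩, hAne⟩ := hq
    have hf := fund n hn i
    have hb := hsupp i j hAne
    refine ⟨⟨⟨⟨by omega, by omega⟩, by omega, by omega⟩, by omega, by omega⟩,
      ⟨⟨by omega, by omega, by omega, by omega, ⟨(n - i) / n, by ring⟩⟩, ?_⟩⟩
    rw [hper]; exact hAne
  · rintro ⟨⟨i, j⟩, m⟩ hx
    simp only [Finset.mem_filter, Finset.mem_product, mem_W] at hx ⊢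
    obtain ⟨⟨⟨⟨hi1, hi2⟩, hj1, hj2⟩, hm1, hm2⟩, ⟨hi1', hi2', hmi, hjm, hdvd⟩, hAne⟩ := hx
    obtain ⟨p, hp⟩ := hdvd
    have hb := hsupp i j hAne
    have hA2 : A (i - m + c) (j - m + c) ≠ 0 := by
      have h2 := hper p (i - m + c) (j - m + c)
      rw [show i - m + c + n * p = i by omega, show j - m + c + n * p = j by omega] at h2
      rw [← h2]; exact hAne
    exact ⟨⟨⟨by omega, by omega⟩, by omega, by omega⟩, ⟨by omega, by omega⟩, hA2⟩
  · rintro ⟨i, j⟩ hq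
    simp only [Prod.mk.injEq]
    constructor <;> ring
  · rintro ⟨⟨i, j⟩, m⟩ hx
    simp only [Finset.mem_filter, Finset.mem_product, mem_W] at hx
    obtain ⟨⟨⟨⟨hi1, hi2⟩, hj1, hj2⟩, hm1, hm2⟩, ⟨hi1', hi2', hmi, hjm, hdvd⟩, hAne⟩ := hx
    obtain ⟨p, hp⟩ := hdvd
    have hf := fund n hn (i - m + c)
    have hmul : n * ((n - (i - m + c)) / n) = n * p :=
      mul_eq_of_close hn (by omega) (by omega)
    simp only [Prod.mk.injEq]
    refine ⟨⟨by omega, by omega⟩, by omega⟩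
  · rintro ⟨i, j⟩ hq
    exact (hper ((n - i) / n) i j).symm
private lemma cohook_neg (K c : ℤ) (A : ℤ → ℤ → ℕ)
    (hsym : ∀ i j : ℤ, A i j = A (-i) (-j)) :
    CW K c A = HW K (-c) A := by
  unfold CW HW
  refine Eq.trans (double_to_filter K (fun i j => i ≤ c ∧ c < j) A)
    (Eq.trans ?_ (double_to_filter K (fun i j => -c ≤ i ∧ j < -c) A).symm)
  refine Finset.sum_nbij' (fun q => (-q.1, -q.2)) (fun q => (-q.1, -q.2)) ?_ ?_ ?_ ?_ ?_
  · rintro ⟨i, j⟩ hq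
    simp only [Finset.mem_filter, Finset.mem_product, mem_W] at hq ⊢
    obtain ⟨⟨⟨hi1, hi2⟩, hj1, hj2⟩, ⟨h1, h2⟩, hAne⟩ := hq
    exact ⟨⟨⟨by omega, by omega⟩, by omega, by omega⟩, ⟨by omega, by omega⟩,
      by rw [← hsym]; exact hAne⟩
  · rintro ⟨i, j⟩ hq
    simp only [Finset.mem_filter, Finset.mem_product, mem_W] at hq ⊢
    obtain ⟨⟨⟨hi1, hi2⟩, hj1, hj2⟩, ⟨h1, h2⟩, hAne⟩ := hq
    exact ⟨⟨⟨by omega, by omega⟩, by omega, by omega⟩, ⟨by omega, by omega⟩,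
      by rw [← hsym]; exact hAne⟩
  · rintro ⟨i, j⟩ _
    simp
  · rintro ⟨i, j⟩ _
    simp
  · rintro ⟨i, j⟩ _
    exact hsym i j

private lemma hook_shift (n M K c : ℤ) (hn : 0 < n) (hM : 0 ≤ M) (hK : K = 10 * (n + M + 1))
    (hc1 : -2 * n ≤ c) (hc2 : c ≤ n) (A : ℤ → ℤ → ℕ)
    (hper : ∀ p i j : ℤ, A (i + n * p) (j + n * p) = A i j)
    (hsupp : ∀ i j, A i j ≠ 0 → i - j ≤ n + M ∧ j - i ≤ n + M) :
    HW K c A = HW K (c + n) A := by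
  unfold HW
  refine Eq.trans (double_to_filter K (fun i j => c ≤ i ∧ j < c) A)
    (Eq.trans ?_ (double_to_filter K (fun i j => c + n ≤ i ∧ j < c + n) A).symm)
  refine Finset.sum_nbij' (fun q => (q.1 + n, q.2 + n)) (fun q => (q.1 - n, q.2 - n)) ?_ ?_ ?_ ?_ ?_
  · rintro ⟨i, j⟩ hq
    simp only [Finset.mem_filter, Finset.mem_product, mem_W] at hq ⊢
    obtain ⟨⟨⟨hi1, hi2⟩, hj1, hj2⟩, ⟨h1, h2⟩, hAne⟩ := hq
    have hb := hsupp i j hAne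
    have hA2 : A (i + n) (j + n) ≠ 0 := by
      have h3 := hper 1 i j
      rw [mul_one] at h3
      rw [h3]; exact hAne
    exact ⟨⟨⟨by omega, by omega⟩, by omega, by omega⟩, ⟨by omega, by omega⟩, hA2⟩
  · rintro ⟨i, j⟩ hq
    simp only [Finset.mem_filter, Finset.mem_product, mem_W] at hq ⊢
    obtain ⟨⟨⟨hi1, hi2⟩, hj1, hj2⟩, ⟨h1, h2⟩, hAne⟩ := hq
    have hb := hsupp i j hAne
    have hA2 : A (i - n) (j - n) ≠ 0 := by
      have h3 := hper 1 (i - n) (j - n)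
      rw [mul_one] at h3
      rw [show i - n + n = i by ring, show j - n + n = j by ring] at h3
      rw [← h3]; exact hAne
    exact ⟨⟨⟨by omega, by omega⟩, by omega, by omega⟩, ⟨by omega, by omega⟩, hA2⟩
  · rintro ⟨i, j⟩ _
    simp only [Prod.mk.injEq]
    constructor <;> ring
  · rintro ⟨i, j⟩ _
    simp only [Prod.mk.injEq]
    constructor <;> ring
  · rintro ⟨i, j⟩ _
    have h3 := hper 1 i j
    rw [mul_one] at h3
    exact h3.symm
private lemma ite_and_drop {c : Prop} (X : Prop) [Decidable (c ∧ X)] [Decidable X]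
    (hc : c) (v : ℕ) : (if c ∧ X then v else 0) = if X then v else 0 :=
  if_congr (and_iff_right hc) rfl rfl

private lemma ite_and_drop_neg {c : Prop} (X : Prop) [Decidable (c ∧ X)]
    (hc : ¬c) (v : ℕ) : (if c ∧ X then v else 0) = 0 :=
  if_neg fun h => hc h.1

private lemma key_ite (P1 P2 Q1 Q2 : Prop) [Decidable P1] [Decidable P2] [Decidable Q1]
    [Decidable Q2] (x y : ℕ) (h11 : ¬(P1 ∧ Q1)) (h12 : ¬(P1 ∧ Q2)) (h21 : ¬(P2 ∧ Q1))
    (h22 : ¬(P2 ∧ Q2)) :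
    (x + (if P1 then 1 else 0) + if P2 then 1 else 0) *
      (y + (if Q1 then 1 else 0) + if Q2 then 1 else 0)
    = x * y + ((if Q1 then x else 0) + if Q2 then x else 0)
        + ((if P1 then y else 0) + if P2 then y else 0) := by
  by_cases p1 : P1 <;> by_cases p2 : P2 <;> by_cases q1 : Q1 <;> by_cases q2 : Q2 <;>
    first
      | (exfalso; tauto)
      | (simp [p1, p2, q1, q2]; try ring)

private lemma quad_expand (K n c2 : ℤ) (hn : 0 < n) (hc2 : 0 < c2) (hc2n : c2 < n)
    (hKn : n ≤ K) (A : ℤ → ℤ → ℕ) :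
    QW K n (fun a b => A a b + (if a = b ∧ n ∣ a then 1 else 0) +
        if a = b ∧ n ∣ a - c2 then 1 else 0)
      = QW K n A + (TW K n 0 A + TW K n c2 A) + (CW K n A + CW K c2 A) := by
  have key : ∀ i j m l : ℤ,
      (if 1 ≤ i ∧ i ≤ n ∧ m ≤ i ∧ j < l then
          (A i j + (if i = j ∧ n ∣ i then 1 else 0) + if i = j ∧ n ∣ i - c2 then 1 else 0) *
          (A m l + (if m = l ∧ n ∣ m then 1 else 0) + if m = l ∧ n ∣ m - c2 then 1 else 0)
        else 0)
      = (if 1 ≤ i ∧ i ≤ n ∧ m ≤ i ∧ j < l then A i j * A m l else 0)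
        + (((if (1 ≤ i ∧ i ≤ n ∧ m ≤ i ∧ j < l) ∧ (m = l ∧ n ∣ m) then A i j else 0))
            + if (1 ≤ i ∧ i ≤ n ∧ m ≤ i ∧ j < l) ∧ (m = l ∧ n ∣ m - c2) then A i j else 0)
        + (((if (1 ≤ i ∧ i ≤ n ∧ m ≤ i ∧ j < l) ∧ (i = n ∧ j = n) then A m l else 0))
            + if (1 ≤ i ∧ i ≤ n ∧ m ≤ i ∧ j < l) ∧ (i = c2 ∧ j = c2) then A m l else 0) := by
    intro i j m l
    by_cases hc : 1 ≤ i ∧ i ≤ n ∧ m ≤ i ∧ j < l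
    · rw [if_pos hc, if_pos hc, ite_and_drop _ hc, ite_and_drop _ hc, ite_and_drop _ hc,
        ite_and_drop _ hc]
      obtain ⟨h1, h2, h3, h4⟩ := hc
      have r1 : (i = j ∧ n ∣ i) ↔ (i = n ∧ j = n) := by
        constructor
        · rintro ⟨rfl, hdvd⟩
          have : i - n = 0 := dvd_small hn (dvd_sub hdvd dvd_rfl) (by omega) (by omega)
          omega
        · rintro ⟨rfl, rfl⟩
          exact ⟨rfl, dvd_rfl⟩
      have r2 : (i = j ∧ n ∣ i - c2) ↔ (i = c2 ∧ j = c2) := by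
        constructor
        · rintro ⟨rfl, hdvd⟩
          have : i - c2 = 0 := dvd_small hn hdvd (by omega) (by omega)
          omega
        · rintro ⟨rfl, rfl⟩
          exact ⟨rfl, by simp⟩
      simp only [r1, r2]
      exact key_ite _ _ _ _ (A i j) (A m l)
        (by rintro ⟨⟨rfl, rfl⟩, ⟨rfl, -⟩⟩; omega)
        (by rintro ⟨⟨rfl, rfl⟩, ⟨rfl, -⟩⟩; omega)
        (by rintro ⟨⟨rfl, rfl⟩, ⟨rfl, -⟩⟩; omega)
        (by rintro ⟨⟨rfl, rfl⟩, ⟨rfl, -⟩⟩; omega)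
    · rw [if_neg hc, if_neg hc, ite_and_drop_neg _ hc, ite_and_drop_neg _ hc,
        ite_and_drop_neg _ hc, ite_and_drop_neg _ hc]
  have step1 : QW K n (fun a b => A a b + (if a = b ∧ n ∣ a then 1 else 0) +
      if a = b ∧ n ∣ a - c2 then 1 else 0)
      = QW K n A
        + ((∑ i ∈ W K, ∑ j ∈ W K, ∑ m ∈ W K, ∑ l ∈ W K,
            if (1 ≤ i ∧ i ≤ n ∧ m ≤ i ∧ j < l) ∧ (m = l ∧ n ∣ m) then A i j else 0)
          + ∑ i ∈ W K, ∑ j ∈ W K, ∑ m ∈ W K, ∑ l ∈ W K,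
            if (1 ≤ i ∧ i ≤ n ∧ m ≤ i ∧ j < l) ∧ (m = l ∧ n ∣ m - c2) then A i j else 0)
        + ((∑ i ∈ W K, ∑ j ∈ W K, ∑ m ∈ W K, ∑ l ∈ W K,
            if (1 ≤ i ∧ i ≤ n ∧ m ≤ i ∧ j < l) ∧ (i = n ∧ j = n) then A m l else 0)
          + ∑ i ∈ W K, ∑ j ∈ W K, ∑ m ∈ W K, ∑ l ∈ W K,
            if (1 ≤ i ∧ i ≤ n ∧ m ≤ i ∧ j < l) ∧ (i = c2 ∧ j = c2) then A m l else 0) := by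
    unfold QW
    refine Eq.trans (Finset.sum_congr rfl fun i _ => Finset.sum_congr rfl fun j _ =>
      Finset.sum_congr rfl fun m _ => Finset.sum_congr rfl fun l _ => key i j m l) ?_
    simp only [Finset.sum_add_distrib]
  rw [step1]
  congr 1
  · congr 1
    congr 1
    · -- first T-sum equals TW K n 0 A
      unfold TW
      refine Finset.sum_congr rfl fun i _ => Finset.sum_congr rfl fun j _ =>
        Finset.sum_congr rfl fun m hm => ?_
      refine (Finset.sum_eq_single_of_mem m hm ?_).trans ?_
      · intro l _ hl
        exact if_neg fun h => hl h.2.1.symm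
      · refine if_congr ?_ rfl rfl
        constructor
        · rintro ⟨⟨a, b, c, d⟩, -, e⟩
          exact ⟨a, b, c, d, by simpa using e⟩
        · rintro ⟨a, b, c, d, e⟩
          exact ⟨⟨a, b, c, d⟩, rfl, by simpa using e⟩
    · -- second T-sum equals TW K n c2 A
      unfold TW
      refine Finset.sum_congr rfl fun i _ => Finset.sum_congr rfl fun j _ =>
        Finset.sum_congr rfl fun m hm => ?_
      refine (Finset.sum_eq_single_of_mem m hm ?_).trans ?_
      · intro l _ hl
        exact if_neg fun h => hl h.2.1.symm
      · refine if_congr ?_ rfl rfl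
        constructor
        · rintro ⟨⟨a, b, c, d⟩, -, e⟩
          exact ⟨a, b, c, d, e⟩
        · rintro ⟨a, b, c, d, e⟩
          exact ⟨⟨a, b, c, d⟩, rfl, e⟩
  · congr 1
    · -- C-sum at n
      have hnW : n ∈ W K := mem_W.2 ⟨by omega, hKn⟩
      refine (Finset.sum_eq_single_of_mem n hnW ?_).trans ?_
      · intro i _ hi
        refine Finset.sum_eq_zero fun j _ => Finset.sum_eq_zero fun m _ =>
          Finset.sum_eq_zero fun l _ => if_neg fun h => hi h.2.1
      · refine (Finset.sum_eq_single_of_mem n hnW ?_).trans ?_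
        · intro j _ hj
          refine Finset.sum_eq_zero fun m _ => Finset.sum_eq_zero fun l _ =>
            if_neg fun h => hj h.2.2
        · unfold CW
          refine Finset.sum_congr rfl fun m _ => Finset.sum_congr rfl fun l _ => ?_
          refine if_congr ?_ rfl rfl
          constructor
          · rintro ⟨⟨-, -, c, d⟩, -⟩
            exact ⟨c, d⟩
          · rintro ⟨c, d⟩
            exact ⟨⟨by omega, le_refl n, c, d⟩, rfl, rfl⟩
    · -- C-sum at c2
      have hcW : c2 ∈ W K := mem_W.2 ⟨by omega, by omega⟩
      refine (Finset.sum_eq_single_of_mem c2 hcW ?_).trans ?_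
      · intro i _ hi
        refine Finset.sum_eq_zero fun j _ => Finset.sum_eq_zero fun m _ =>
          Finset.sum_eq_zero fun l _ => if_neg fun h => hi h.2.1
      · refine (Finset.sum_eq_single_of_mem c2 hcW ?_).trans ?_
        · intro j _ hj
          refine Finset.sum_eq_zero fun m _ => Finset.sum_eq_zero fun l _ =>
            if_neg fun h => hj h.2.2
        · unfold CW
          refine Finset.sum_congr rfl fun m _ => Finset.sum_congr rfl fun l _ => ?_
          refine if_congr ?_ rfl rfl
          constructor
          · rintro ⟨⟨-, -, c, d⟩, -⟩
            exact ⟨c, d⟩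
          · rintro ⟨c, d⟩
            exact ⟨⟨by omega, by omega, c, d⟩, rfl, rfl⟩

/-- Let `A ∈ ^cΞ_{n,d}` and `A′ = A + E^{00} + E^{r+1,r+1}`.  Then
`A′ ∈ Ξ_{n,d}` and `Σ'(A) + Σ_0(A) + Σ_{r+1}(A) = Σ'(A′) - Σ_0(A′) - Σ_{r+1}(A′)`. -/
theorem statement16 (r d : ℕ) (hd : 1 ≤ d) (A : ℤ → ℤ → ℕ) (hA : MemXiCper r d A) :
    MemXi r d (fun a b => A a b + Eper (2 * r + 2) 0 0 a b +
      Eper (2 * r + 2) ((r : ℤ) + 1) ((r : ℤ) + 1) a b) ∧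
    (SigQuad r A : ℤ) + (SigHook 0 A : ℤ) + (SigHook ((r : ℤ) + 1) A : ℤ) =
      (SigQuad r (fun a b => A a b + Eper (2 * r + 2) 0 0 a b +
          Eper (2 * r + 2) ((r : ℤ) + 1) ((r : ℤ) + 1) a b) : ℤ)
        - (SigHook 0 (fun a b => A a b + Eper (2 * r + 2) 0 0 a b +
            Eper (2 * r + 2) ((r : ℤ) + 1) ((r : ℤ) + 1) a b) : ℤ)
        - (SigHook ((r : ℤ) + 1) (fun a b => A a b + Eper (2 * r + 2) 0 0 a b +
            Eper (2 * r + 2) ((r : ℤ) + 1) ((r : ℤ) + 1) a b) : ℤ) := by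
  obtain ⟨hsym, hper1, hev0, hev1, hsum⟩ := hA
  have hn : (0:ℤ) < 2 * (r:ℤ) + 2 := by omega
  -- full periodicity
  have hperA : ∀ (p i j : ℤ),
      A (i + (2 * (r:ℤ) + 2) * p) (j + (2 * (r:ℤ) + 2) * p) = A i j := by
    intro p
    induction p using Int.induction_on with
    | zero => intro i j; simp
    | succ k ih =>
        intro i j
        have h1 := hper1 (i + (2 * (r:ℤ) + 2) * k) (j + (2 * (r:ℤ) + 2) * k)
        rw [show i + (2 * (r:ℤ) + 2) * ((k:ℤ) + 1)
            = i + (2 * (r:ℤ) + 2) * (k:ℤ) + (2 * (r:ℤ) + 2) by ring,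
          show j + (2 * (r:ℤ) + 2) * ((k:ℤ) + 1)
            = j + (2 * (r:ℤ) + 2) * (k:ℤ) + (2 * (r:ℤ) + 2) by ring, ← h1]
        exact ih i j
    | pred k ih =>
        intro i j
        have h1 := hper1 (i + (2 * (r:ℤ) + 2) * (-(k:ℤ) - 1))
          (j + (2 * (r:ℤ) + 2) * (-(k:ℤ) - 1))
        rw [h1, show i + (2 * (r:ℤ) + 2) * (-(k:ℤ) - 1) + (2 * (r:ℤ) + 2)
            = i + (2 * (r:ℤ) + 2) * (-(k:ℤ)) by ring,
          show j + (2 * (r:ℤ) + 2) * (-(k:ℤ) - 1) + (2 * (r:ℤ) + 2)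
            = j + (2 * (r:ℤ) + 2) * (-(k:ℤ)) by ring]
        exact ih i j
  -- finite support in j
  have hfinJ : (Function.support fun j : ℤ =>
      ∑ i ∈ Finset.Icc (1:ℤ) (2 * (r:ℤ) + 2), A i j).Finite := by
    by_contra hcon
    rw [finsum_of_infinite_support hcon] at hsum
    omega
  obtain ⟨Mu, hMu⟩ := hfinJ.bddAbove
  obtain ⟨Ml, hMl⟩ := hfinJ.bddBelow
  have hM0 : (0:ℤ) ≤ |Mu| + |Ml| := by positivity
  have hMb : ∀ j : ℤ, (∑ i ∈ Finset.Icc (1:ℤ) (2 * (r:ℤ) + 2), A i j) ≠ 0 →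
      -(|Mu| + |Ml|) ≤ j ∧ j ≤ |Mu| + |Ml| := by
    intro j hj
    have h1 : j ≤ Mu := hMu (Function.mem_support.mpr hj)
    have h2 : Ml ≤ j := hMl (Function.mem_support.mpr hj)
    have h3 := le_abs_self Mu
    have h4 := neg_abs_le Ml
    have h5 := abs_nonneg Mu
    have h6 := abs_nonneg Ml
    omega
  have hsuppA : ∀ i j : ℤ, A i j ≠ 0 →
      i - j ≤ (2 * (r:ℤ) + 2) + (|Mu| + |Ml|) ∧
      j - i ≤ (2 * (r:ℤ) + 2) + (|Mu| + |Ml|) := by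
    intro i j hne
    have hf := fund (2 * (r:ℤ) + 2) hn i
    have hAeq := hperA ((2 * (r:ℤ) + 2 - i) / (2 * (r:ℤ) + 2)) i j
    have hsum_ne : (∑ i' ∈ Finset.Icc (1:ℤ) (2 * (r:ℤ) + 2),
        A i' (j + (2 * (r:ℤ) + 2) * ((2 * (r:ℤ) + 2 - i) / (2 * (r:ℤ) + 2)))) ≠ 0 := by
      intro h0
      have hmem : i + (2 * (r:ℤ) + 2) * ((2 * (r:ℤ) + 2 - i) / (2 * (r:ℤ) + 2)) ∈
          Finset.Icc (1:ℤ) (2 * (r:ℤ) + 2) := Finset.mem_Icc.mpr ⟨hf.1, hf.2⟩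
      have := (Finset.sum_eq_zero_iff.mp h0) _ hmem
      rw [hAeq] at this
      exact hne this
    have hb := hMb _ hsum_ne
    omega
  -- characterization of the two Eper matrices
  have hE1 : ∀ a b : ℤ, Eper (2 * (r:ℤ) + 2) 0 0 a b
      = if a = b ∧ (2 * (r:ℤ) + 2) ∣ a then 1 else 0 := by
    intro a b
    show (if ∃ p : ℤ, a = 0 + p * (2 * (r:ℤ) + 2) ∧ b = 0 + p * (2 * (r:ℤ) + 2) then 1 else 0)
      = _
    refine if_congr ?_ rfl rfl
    constructor
    · rintro ⟨p, rfl, rfl⟩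
      exact ⟨rfl, ⟨p, by ring⟩⟩
    · rintro ⟨rfl, p, hp⟩
      exact ⟨p, by linear_combination hp, by linear_combination hp⟩
  have hE2 : ∀ a b : ℤ, Eper (2 * (r:ℤ) + 2) ((r:ℤ) + 1) ((r:ℤ) + 1) a b
      = if a = b ∧ (2 * (r:ℤ) + 2) ∣ (a - ((r:ℤ) + 1)) then 1 else 0 := by
    intro a b
    show (if ∃ p : ℤ, a = ((r:ℤ) + 1) + p * (2 * (r:ℤ) + 2) ∧
        b = ((r:ℤ) + 1) + p * (2 * (r:ℤ) + 2) then 1 else 0) = _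
    refine if_congr ?_ rfl rfl
    constructor
    · rintro ⟨p, rfl, rfl⟩
      exact ⟨rfl, ⟨p, by ring⟩⟩
    · rintro ⟨rfl, p, hp⟩
      exact ⟨p, by linear_combination hp, by linear_combination hp⟩
  -- function equality
  have hABeq : (fun a b => A a b + Eper (2 * r + 2) 0 0 a b +
      Eper (2 * r + 2) ((r : ℤ) + 1) ((r : ℤ) + 1) a b)
      = fun a b => A a b + (if a = b ∧ (2 * (r:ℤ) + 2) ∣ a then 1 else 0) +
          if a = b ∧ (2 * (r:ℤ) + 2) ∣ (a - ((r:ℤ) + 1)) then 1 else 0 := by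
    funext a b
    rw [hE1, hE2]
  -- membership
  have hmem : MemXi r d (fun a b => A a b + Eper (2 * r + 2) 0 0 a b +
      Eper (2 * r + 2) ((r : ℤ) + 1) ((r : ℤ) + 1) a b) := by
    rw [hABeq]
    refine ⟨?_, ?_, ?_, ?_, ?_⟩
    · -- symmetry
      intro i j
      show A i j + _ + _ = A (-i) (-j) + _ + _
      have t1 : (if i = j ∧ (2 * (r:ℤ) + 2) ∣ i then (1:ℕ) else 0)
          = if -i = -j ∧ (2 * (r:ℤ) + 2) ∣ -i then 1 else 0 := by
        refine if_congr ⟨fun ⟨h1, h2⟩ => ⟨by omega, dvd_neg.mpr h2⟩,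
          fun ⟨h1, h2⟩ => ⟨by omega, dvd_neg.mp h2⟩⟩ rfl rfl
      have t2 : (if i = j ∧ (2 * (r:ℤ) + 2) ∣ (i - ((r:ℤ) + 1)) then (1:ℕ) else 0)
          = if -i = -j ∧ (2 * (r:ℤ) + 2) ∣ (-i - ((r:ℤ) + 1)) then 1 else 0 := by
        refine if_congr ⟨fun ⟨h1, h2⟩ => ⟨by omega, ?_⟩, fun ⟨h1, h2⟩ => ⟨by omega, ?_⟩⟩ rfl rfl
        · rw [show -i - ((r:ℤ) + 1) = -(i - ((r:ℤ) + 1)) - (2 * (r:ℤ) + 2) by ring]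
          exact dvd_sub (dvd_neg.mpr h2) dvd_rfl
        · rw [show i - ((r:ℤ) + 1) = -(-i - ((r:ℤ) + 1)) - (2 * (r:ℤ) + 2) by ring]
          exact dvd_sub (dvd_neg.mpr h2) dvd_rfl
      rw [hsym i j, t1, t2]
    · -- periodicity
      intro i j
      show A i j + _ + _ = A (i + (2 * (r:ℤ) + 2)) (j + (2 * (r:ℤ) + 2)) + _ + _
      have t1 : (if i = j ∧ (2 * (r:ℤ) + 2) ∣ i then (1:ℕ) else 0)
          = if i + (2 * (r:ℤ) + 2) = j + (2 * (r:ℤ) + 2) ∧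
              (2 * (r:ℤ) + 2) ∣ (i + (2 * (r:ℤ) + 2)) then 1 else 0 := by
        refine if_congr ⟨fun ⟨h1, h2⟩ => ⟨by omega, (dvd_add_self_right).mpr h2⟩,
          fun ⟨h1, h2⟩ => ⟨by omega, (dvd_add_self_right).mp h2⟩⟩ rfl rfl
      have t2 : (if i = j ∧ (2 * (r:ℤ) + 2) ∣ (i - ((r:ℤ) + 1)) then (1:ℕ) else 0)
          = if i + (2 * (r:ℤ) + 2) = j + (2 * (r:ℤ) + 2) ∧
              (2 * (r:ℤ) + 2) ∣ (i + (2 * (r:ℤ) + 2) - ((r:ℤ) + 1)) then 1 else 0 := by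
        refine if_congr ⟨fun ⟨h1, h2⟩ => ⟨by omega, ?_⟩, fun ⟨h1, h2⟩ => ⟨by omega, ?_⟩⟩ rfl rfl
        · rw [show i + (2 * (r:ℤ) + 2) - ((r:ℤ) + 1)
              = (i - ((r:ℤ) + 1)) + (2 * (r:ℤ) + 2) by ring]
          exact (dvd_add_self_right).mpr h2
        · have := (dvd_add_self_right).mp
            (show (2 * (r:ℤ) + 2) ∣ (i - ((r:ℤ) + 1)) + (2 * (r:ℤ) + 2) by
              rw [show (i - ((r:ℤ) + 1)) + (2 * (r:ℤ) + 2)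
                = i + (2 * (r:ℤ) + 2) - ((r:ℤ) + 1) by ring]
              exact h2)
          exact this
      rw [hper1 i j, t1, t2]
    · -- odd at (0,0)
      show Odd (A 0 0 + _ + _)
      rw [if_pos ⟨rfl, dvd_zero _⟩, if_neg]
      · have : Odd (A 0 0 + 1) := hev0.add_one
        simpa using this
      · rintro ⟨-, h⟩
        have := dvd_small hn h (by omega) (by omega)
        omega
    · -- odd at (r+1, r+1)
      show Odd (A ((r:ℤ) + 1) ((r:ℤ) + 1) + _ + _)
      rw [if_neg, if_pos ⟨rfl, by simp⟩]
      · have : Odd (A ((r:ℤ) + 1) ((r:ℤ) + 1) + 1) := hev1.add_one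
        simpa [add_assoc] using this
      · rintro ⟨-, h⟩
        have := dvd_small hn h (by omega) (by omega)
        omega
    · -- total sum
      have hsplit : ∀ j : ℤ, (∑ i ∈ Finset.Icc (1:ℤ) (2 * (r:ℤ) + 2),
          (A i j + (if i = j ∧ (2 * (r:ℤ) + 2) ∣ i then 1 else 0) +
            if i = j ∧ (2 * (r:ℤ) + 2) ∣ (i - ((r:ℤ) + 1)) then 1 else 0))
          = ((∑ i ∈ Finset.Icc (1:ℤ) (2 * (r:ℤ) + 2), A i j) +
              (∑ i ∈ Finset.Icc (1:ℤ) (2 * (r:ℤ) + 2),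
                if i = j ∧ (2 * (r:ℤ) + 2) ∣ i then 1 else 0)) +
            ∑ i ∈ Finset.Icc (1:ℤ) (2 * (r:ℤ) + 2),
              if i = j ∧ (2 * (r:ℤ) + 2) ∣ (i - ((r:ℤ) + 1)) then 1 else 0 := by
        intro j
        rw [Finset.sum_add_distrib, Finset.sum_add_distrib]
      have hsup1 : (Function.support fun j : ℤ =>
          ∑ i ∈ Finset.Icc (1:ℤ) (2 * (r:ℤ) + 2),
            if i = j ∧ (2 * (r:ℤ) + 2) ∣ i then 1 else 0).Finite := by
        refine Set.Finite.subset (Set.finite_singleton (2 * (r:ℤ) + 2)) ?_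
        intro j hj
        simp only [Function.mem_support] at hj
        simp only [Set.mem_singleton_iff]
        by_contra hne
        apply hj
        refine Finset.sum_eq_zero fun i hi => if_neg ?_
        rintro ⟨rfl, hdvd⟩
        simp only [Finset.mem_Icc] at hi
        have := dvd_small hn (dvd_sub hdvd dvd_rfl) (by omega) (by omega)
        omega
      have hsup2 : (Function.support fun j : ℤ =>
          ∑ i ∈ Finset.Icc (1:ℤ) (2 * (r:ℤ) + 2),
            if i = j ∧ (2 * (r:ℤ) + 2) ∣ (i - ((r:ℤ) + 1)) then 1 else 0).Finite := by
        refine Set.Finite.subset (Set.finite_singleton ((r:ℤ) + 1)) ?_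
        intro j hj
        simp only [Function.mem_support] at hj
        simp only [Set.mem_singleton_iff]
        by_contra hne
        apply hj
        refine Finset.sum_eq_zero fun i hi => if_neg ?_
        rintro ⟨rfl, hdvd⟩
        simp only [Finset.mem_Icc] at hi
        have := dvd_small hn hdvd (by omega) (by omega)
        omega
      show (∑ᶠ j : ℤ, ∑ i ∈ Finset.Icc (1:ℤ) (2 * (r:ℤ) + 2),
          (A i j + (if i = j ∧ (2 * (r:ℤ) + 2) ∣ i then 1 else 0) +
            if i = j ∧ (2 * (r:ℤ) + 2) ∣ (i - ((r:ℤ) + 1)) then 1 else 0)) = 2 * d + 2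
      rw [finsum_congr hsplit]
      rw [finsum_add_distrib (Set.Finite.subset (hfinJ.union hsup1)
        (Function.support_add _ _)) hsup2]
      rw [finsum_add_distrib hfinJ hsup1]
      have v1 : (∑ᶠ j : ℤ, ∑ i ∈ Finset.Icc (1:ℤ) (2 * (r:ℤ) + 2),
          if i = j ∧ (2 * (r:ℤ) + 2) ∣ i then (1:ℕ) else 0) = 1 := by
        rw [finsum_eq_single _ (2 * (r:ℤ) + 2)]
        · rw [Finset.sum_eq_single_of_mem (2 * (r:ℤ) + 2)
            (Finset.mem_Icc.mpr ⟨by omega, le_refl _⟩)]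
          · rw [if_pos ⟨rfl, dvd_rfl⟩]
          · intro i hi hne
            exact if_neg fun h => hne h.1
        · intro j hne
          refine Finset.sum_eq_zero fun i hi => if_neg ?_
          rintro ⟨rfl, hdvd⟩
          simp only [Finset.mem_Icc] at hi
          have := dvd_small hn (dvd_sub hdvd dvd_rfl) (by omega) (by omega)
          omega
      have v2 : (∑ᶠ j : ℤ, ∑ i ∈ Finset.Icc (1:ℤ) (2 * (r:ℤ) + 2),
          if i = j ∧ (2 * (r:ℤ) + 2) ∣ (i - ((r:ℤ) + 1)) then (1:ℕ) else 0) = 1 := by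
        rw [finsum_eq_single _ ((r:ℤ) + 1)]
        · rw [Finset.sum_eq_single_of_mem ((r:ℤ) + 1)
            (Finset.mem_Icc.mpr ⟨by omega, by omega⟩)]
          · rw [if_pos ⟨rfl, by simp⟩]
          · intro i hi hne
            exact if_neg fun h => hne h.1
        · intro j hne
          refine Finset.sum_eq_zero fun i hi => if_neg ?_
          rintro ⟨rfl, hdvd⟩
          simp only [Finset.mem_Icc] at hi
          have := dvd_small hn hdvd (by omega) (by omega)
          omega
      rw [hsum, v1, v2]
  refine ⟨hmem, ?_⟩
  -- notation
  have hsuppAB : ∀ i j : ℤ,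
      (A i j + (if i = j ∧ (2 * (r:ℤ) + 2) ∣ i then 1 else 0) +
        if i = j ∧ (2 * (r:ℤ) + 2) ∣ (i - ((r:ℤ) + 1)) then 1 else 0) ≠ 0 →
      i - j ≤ (2 * (r:ℤ) + 2) + (|Mu| + |Ml|) ∧
      j - i ≤ (2 * (r:ℤ) + 2) + (|Mu| + |Ml|) := by
    intro i j h
    by_cases hA0 : A i j = 0
    · have hij : i = j := by
        by_contra hne
        apply h
        rw [hA0, if_neg fun hh => hne hh.1, if_neg fun hh => hne hh.1]
      omega
    · exact hsuppA i j hA0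
  have hsuppAB' : ∀ i j : ℤ,
      (A i j + (if i = j ∧ (2 * (r:ℤ) + 2) ∣ i then 1 else 0) +
        if i = j ∧ (2 * (r:ℤ) + 2) ∣ (i - ((r:ℤ) + 1)) then 1 else 0) ≠ 0 →
      i - j ≤ (2 * (r:ℤ) + 2) + (|Mu| + |Ml|) ∧
      j - i ≤ (2 * (r:ℤ) + 2) + (|Mu| + |Ml|) := hsuppAB
  rw [hABeq]
  -- abbreviate K
  have q1 : SigQuad r A
      = QW (10 * ((2 * (r:ℤ) + 2) + (|Mu| + |Ml|) + 1)) (2 * (r:ℤ) + 2) A :=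
    sigquad_eq r (|Mu| + |Ml|) _ hM0 rfl A hsuppA
  have q2 : SigQuad r (fun a b => A a b + (if a = b ∧ (2 * (r:ℤ) + 2) ∣ a then 1 else 0) +
        if a = b ∧ (2 * (r:ℤ) + 2) ∣ (a - ((r:ℤ) + 1)) then 1 else 0)
      = QW (10 * ((2 * (r:ℤ) + 2) + (|Mu| + |Ml|) + 1)) (2 * (r:ℤ) + 2)
          (fun a b => A a b + (if a = b ∧ (2 * (r:ℤ) + 2) ∣ a then 1 else 0) +
            if a = b ∧ (2 * (r:ℤ) + 2) ∣ (a - ((r:ℤ) + 1)) then 1 else 0) :=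
    sigquad_eq r (|Mu| + |Ml|) _ hM0 rfl _ hsuppAB
  have k0 : SigHook 0 A
      = HW (10 * ((2 * (r:ℤ) + 2) + (|Mu| + |Ml|) + 1)) 0 A :=
    sighook_eq (2 * (r:ℤ) + 2) (|Mu| + |Ml|) _ 0 hn hM0 rfl ⟨by omega, by omega⟩ A hsuppA
  have k1 : SigHook ((r:ℤ) + 1) A
      = HW (10 * ((2 * (r:ℤ) + 2) + (|Mu| + |Ml|) + 1)) ((r:ℤ) + 1) A :=
    sighook_eq (2 * (r:ℤ) + 2) (|Mu| + |Ml|) _ ((r:ℤ) + 1) hn hM0 rfl ⟨by omega, by omega⟩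
      A hsuppA
  have k0' : SigHook 0 (fun a b => A a b + (if a = b ∧ (2 * (r:ℤ) + 2) ∣ a then 1 else 0) +
        if a = b ∧ (2 * (r:ℤ) + 2) ∣ (a - ((r:ℤ) + 1)) then 1 else 0)
      = HW (10 * ((2 * (r:ℤ) + 2) + (|Mu| + |Ml|) + 1)) 0
          (fun a b => A a b + (if a = b ∧ (2 * (r:ℤ) + 2) ∣ a then 1 else 0) +
            if a = b ∧ (2 * (r:ℤ) + 2) ∣ (a - ((r:ℤ) + 1)) then 1 else 0) :=
    sighook_eq (2 * (r:ℤ) + 2) (|Mu| + |Ml|) _ 0 hn hM0 rfl ⟨by omega, by omega⟩ _ hsuppAB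
  have k1' : SigHook ((r:ℤ) + 1)
        (fun a b => A a b + (if a = b ∧ (2 * (r:ℤ) + 2) ∣ a then 1 else 0) +
          if a = b ∧ (2 * (r:ℤ) + 2) ∣ (a - ((r:ℤ) + 1)) then 1 else 0)
      = HW (10 * ((2 * (r:ℤ) + 2) + (|Mu| + |Ml|) + 1)) ((r:ℤ) + 1)
          (fun a b => A a b + (if a = b ∧ (2 * (r:ℤ) + 2) ∣ a then 1 else 0) +
            if a = b ∧ (2 * (r:ℤ) + 2) ∣ (a - ((r:ℤ) + 1)) then 1 else 0) :=
    sighook_eq (2 * (r:ℤ) + 2) (|Mu| + |Ml|) _ ((r:ℤ) + 1) hn hM0 rfl ⟨by omega, by omega⟩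
      _ hsuppAB
  -- hooks of A' equal hooks of A
  have hooks_eq : ∀ c : ℤ,
      HW (10 * ((2 * (r:ℤ) + 2) + (|Mu| + |Ml|) + 1)) c
        (fun a b => A a b + (if a = b ∧ (2 * (r:ℤ) + 2) ∣ a then 1 else 0) +
          if a = b ∧ (2 * (r:ℤ) + 2) ∣ (a - ((r:ℤ) + 1)) then 1 else 0)
      = HW (10 * ((2 * (r:ℤ) + 2) + (|Mu| + |Ml|) + 1)) c A := by
    intro c
    unfold HW
    refine Finset.sum_congr rfl fun i _ => Finset.sum_congr rfl fun j _ => ?_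
    by_cases hcnd : c ≤ i ∧ j < c
    · rw [if_pos hcnd, if_pos hcnd]
      show A i j + _ + _ = A i j
      rw [if_neg fun hh => by omega, if_neg fun hh => by omega]
      omega
    · rw [if_neg hcnd, if_neg hcnd]
  -- quad expansion
  have hQ := quad_expand (10 * ((2 * (r:ℤ) + 2) + (|Mu| + |Ml|) + 1)) (2 * (r:ℤ) + 2)
    ((r:ℤ) + 1) hn (by omega) (by omega) (by omega) A
  -- T sums are hooks
  have hT0 : TW (10 * ((2 * (r:ℤ) + 2) + (|Mu| + |Ml|) + 1)) (2 * (r:ℤ) + 2) 0 A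
      = HW (10 * ((2 * (r:ℤ) + 2) + (|Mu| + |Ml|) + 1)) 0 A :=
    (hook_decomp (2 * (r:ℤ) + 2) (|Mu| + |Ml|) _ 0 hn hM0 rfl (le_refl 0) (by omega)
      A hperA hsuppA).symm
  have hT1 : TW (10 * ((2 * (r:ℤ) + 2) + (|Mu| + |Ml|) + 1)) (2 * (r:ℤ) + 2) ((r:ℤ) + 1) A
      = HW (10 * ((2 * (r:ℤ) + 2) + (|Mu| + |Ml|) + 1)) ((r:ℤ) + 1) A :=
    (hook_decomp (2 * (r:ℤ) + 2) (|Mu| + |Ml|) _ ((r:ℤ) + 1) hn hM0 rfl (by omega) (by omega)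
      A hperA hsuppA).symm
  -- C sums are hooks
  have hC0 : CW (10 * ((2 * (r:ℤ) + 2) + (|Mu| + |Ml|) + 1)) (2 * (r:ℤ) + 2) A
      = HW (10 * ((2 * (r:ℤ) + 2) + (|Mu| + |Ml|) + 1)) 0 A := by
    rw [cohook_neg _ _ A hsym]
    have hsh := hook_shift (2 * (r:ℤ) + 2) (|Mu| + |Ml|) _ (-(2 * (r:ℤ) + 2)) hn hM0 rfl
      (by omega) (by omega) A hperA hsuppA
    rw [show -(2 * (r:ℤ) + 2) + (2 * (r:ℤ) + 2) = (0:ℤ) by ring] at hsh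
    exact hsh
  have hC1 : CW (10 * ((2 * (r:ℤ) + 2) + (|Mu| + |Ml|) + 1)) ((r:ℤ) + 1) A
      = HW (10 * ((2 * (r:ℤ) + 2) + (|Mu| + |Ml|) + 1)) ((r:ℤ) + 1) A := by
    rw [cohook_neg _ _ A hsym]
    have hsh := hook_shift (2 * (r:ℤ) + 2) (|Mu| + |Ml|) _ (-((r:ℤ) + 1)) hn hM0 rfl
      (by omega) (by omega) A hperA hsuppA
    rw [show -((r:ℤ) + 1) + (2 * (r:ℤ) + 2) = (r:ℤ) + 1 by ring] at hsh
    exact hsh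
  rw [q1, q2, k0, k1, k0', k1', hooks_eq, hooks_eq, hQ, hT0, hT1, hC0, hC1]
  push_cast
  ring
end
end
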